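/- For N a common multiple of positive integers a_0, ..., a_n with n even, define t(a) = (-1)^{n/2}/N · Σ_{j=0}^{N-1} cot(π(2j+1)/(2N)) · ∏_{i=0}^{n} cot(π(2j+1)/(2a_i)). Then the value of this expression is independent of the choice of common multiple N. -/

import Mathlib

open Real

/-- Partial-fraction style identity: sum over k-th roots of unity. -/
lemma zag_sum_inv (k : ℕ) (hk : 0 < k) (w : ℂ) (hw : w ^ k ≠ 1) :
    ∑ q ∈ Finset.range k, 1 / (w * Complex.exp (2 * π * Complex.I * q / k) - 1)
      = k / (w ^ k - 1) := by
  have hk0 : (k : ℂ) ≠ 0 := Nat.cast_ne_zero.mpr hk.ne'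
  set ζ : ℕ → ℂ := fun q => Complex.exp (2 * π * Complex.I * q / k) with hζ
  have hζk : ∀ q : ℕ, ζ q ^ k = 1 := by
    intro q
    rw [hζ, ← Complex.exp_nat_mul]
    have : (k : ℂ) * (2 * π * Complex.I * q / k) = (q : ℤ) * (2 * π * Complex.I) := by
      field_simp; push_cast; ring
    rw [this, Complex.exp_int_mul_two_pi_mul_I]
  have hpow : ∀ q : ℕ, (w * ζ q) ^ k = w ^ k := by
    intro q; rw [mul_pow, hζk, mul_one]
  have hd : ∀ q : ℕ, w * ζ q - 1 ≠ 0 := by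
    intro q h
    apply hw
    rw [← hpow q, sub_eq_zero.mp h, one_pow]
  have hne : w ^ k - 1 ≠ 0 := sub_ne_zero.mpr hw
  have step1 : ∀ q : ℕ, 1 / (w * ζ q - 1)
      = (∑ m ∈ Finset.range k, (w * ζ q) ^ m) / (w ^ k - 1) := by
    intro q
    have := geom_sum_mul (w * ζ q) k
    rw [hpow q] at this
    rw [eq_div_iff hne, ← this, one_div, inv_mul_eq_div, mul_div_assoc,
      div_self (hd q), mul_one]
  rw [Finset.sum_congr rfl fun q _ => step1 q, ← Finset.sum_div]
  congr 1
  rw [Finset.sum_comm]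
  have inner : ∀ m ∈ Finset.range k,
      ∑ q ∈ Finset.range k, (w * ζ q) ^ m = if m = 0 then (k : ℂ) else 0 := by
    intro m hm
    rcases eq_or_ne m 0 with rfl | hm0
    · simp
    · simp only [if_neg hm0]
      have hrw : ∀ q : ℕ, (w * ζ q) ^ m
          = w ^ m * (Complex.exp (2 * π * Complex.I * m / k)) ^ q := by
        intro q
        rw [mul_pow, hζ, ← Complex.exp_nat_mul, ← Complex.exp_nat_mul]
        congr 2
        field_simp
      simp only [hrw, ← Finset.mul_sum]
      have hr1 : Complex.exp (2 * π * Complex.I * m / k) ≠ 1 := by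
        intro hcon
        rw [Complex.exp_eq_one_iff] at hcon
        obtain ⟨j, hj⟩ := hcon
        have h2 : (2 * (π : ℂ) * Complex.I) ≠ 0 := by
          simp [Real.pi_ne_zero, Complex.I_ne_zero, Complex.ofReal_ne_zero]
        have hdiv : (m : ℂ) / k = j := by
          apply mul_left_cancel₀ h2
          linear_combination hj
        have hmjk : (m : ℂ) = j * k := by
          field_simp at hdiv; linear_combination hdiv
        have hm' : (m : ℤ) = j * k := by exact_mod_cast hmjk
        have hmk : m < k := Finset.mem_range.mp hm
        have hkz : (1 : ℤ) ≤ k := by exact_mod_cast hk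
        rcases lt_trichotomy j 0 with hj0 | rfl | hj0
        · nlinarith [hm', hkz, hj0, Int.ofNat_nonneg m]
        · simp at hm'; omega
        · nlinarith [hm', hkz, hj0, (show (m:ℤ) < k by exact_mod_cast hmk)]
      rw [geom_sum_eq hr1, ← Complex.exp_nat_mul]
      have : (k : ℂ) * (2 * π * Complex.I * m / k) = (m : ℤ) * (2 * π * Complex.I) := by
        field_simp; push_cast; ring
      rw [this, Complex.exp_int_mul_two_pi_mul_I, sub_self, zero_div, mul_zero]
  rw [Finset.sum_congr rfl inner]
  simp [Finset.sum_ite_eq', Finset.mem_range, hk]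

lemma zag_cot_exp (z : ℂ) (h : Complex.exp (2 * Complex.I * z) ≠ 1) :
    Complex.cot z = Complex.I + 2 * Complex.I / (Complex.exp (2 * Complex.I * z) - 1) := by
  rw [Complex.cot_eq_exp_ratio]
  set u := Complex.exp (2 * Complex.I * z) with hu
  have h1 : u - 1 ≠ 0 := sub_ne_zero.mpr h
  have h2 : (1 : ℂ) - u ≠ 0 := fun hc => h (by linear_combination -hc)
  have h3 : Complex.I * (1 - u) ≠ 0 := mul_ne_zero Complex.I_ne_zero h2
  field_simp
  linear_combination (u - 1) * (u + 1) * Complex.I_sq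

lemma zag_cot_multiple (k : ℕ) (hk : 0 < k) (x : ℝ)
    (h : Complex.exp (2 * Complex.I * (k * x : ℝ)) ≠ 1) :
    ∑ q ∈ Finset.range k, Real.cot (x + q * π / k) = k * Real.cot (k * x) := by
  have hk0 : (k : ℂ) ≠ 0 := Nat.cast_ne_zero.mpr hk.ne'
  apply Complex.ofReal_injective
  push_cast [Complex.ofReal_cot]
  set w := Complex.exp (2 * Complex.I * x) with hwdef
  have hwk : w ^ k = Complex.exp (2 * Complex.I * ((k : ℂ) * x)) := by
    rw [hwdef, ← Complex.exp_nat_mul]; ring_nf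
  have hw : w ^ k ≠ 1 := by rw [hwk]; convert h using 2; push_cast; ring
  have hterm : ∀ q : ℕ,
      Complex.exp (2 * Complex.I * ((x : ℂ) + q * π / k))
        = w * Complex.exp (2 * π * Complex.I * q / k) := by
    intro q
    rw [hwdef, ← Complex.exp_add]
    congr 1
    field_simp
  have hd : ∀ q : ℕ, Complex.exp (2 * Complex.I * ((x : ℂ) + q * π / k)) ≠ 1 := by
    intro q hc
    apply hw
    rw [hterm] at hc
    have hζk : Complex.exp (2 * π * Complex.I * q / k) ^ k = 1 := by
      rw [← Complex.exp_nat_mul]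
      have he : (k : ℂ) * (2 * π * Complex.I * q / k) = (q : ℤ) * (2 * π * Complex.I) := by
        field_simp; push_cast; ring
      rw [he, Complex.exp_int_mul_two_pi_mul_I]
    have : (w * Complex.exp (2 * π * Complex.I * q / k)) ^ k = 1 := by rw [hc, one_pow]
    rwa [mul_pow, hζk, mul_one] at this
  calc ∑ q ∈ Finset.range k, Complex.cot ((x : ℂ) + q * π / k)
      = ∑ q ∈ Finset.range k, (Complex.I + 2 * Complex.I /
          (w * Complex.exp (2 * π * Complex.I * q / k) - 1)) := by
        refine Finset.sum_congr rfl fun q _ => ?_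
        rw [zag_cot_exp _ (hd q), hterm q]
    _ = k * Complex.I + 2 * Complex.I * (k / (w ^ k - 1)) := by
        rw [Finset.sum_add_distrib, Finset.sum_const, Finset.card_range]
        rw [show (∑ q ∈ Finset.range k, 2 * Complex.I /
            (w * Complex.exp (2 * π * Complex.I * q / k) - 1))
          = 2 * Complex.I * ∑ q ∈ Finset.range k, 1 /
            (w * Complex.exp (2 * π * Complex.I * q / k) - 1) by
            rw [Finset.mul_sum]; exact Finset.sum_congr rfl fun q _ => by ring]
        rw [zag_sum_inv k hk w hw]
        simp [nsmul_eq_mul]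
    _ = k * Complex.cot ((k : ℂ) * x) := by
        rw [zag_cot_exp ((k:ℂ) * x) (by rwa [← hwk] ), ← hwk]
        field_simp [sub_ne_zero.mpr hw]

lemma zag_cot_add_int (x : ℝ) (n : ℤ) : Real.cot (x + n * π) = Real.cot x := by
  rw [Real.cot_eq_cos_div_sin, Real.cot_eq_cos_div_sin, Real.sin_add_int_mul_pi,
    Real.cos_add_int_mul_pi,
    mul_div_mul_left _ _ (by first
      | exact zpow_ne_zero _ (by norm_num)
      | exact zpow_ne_zero (by norm_num) _)]

lemma zag_sum_range_mul {M : Type*} [AddCommMonoid M] (f : ℕ → M) (k N : ℕ) :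
    ∑ j ∈ Finset.range (k * N), f j
      = ∑ q ∈ Finset.range k, ∑ r ∈ Finset.range N, f (q * N + r) := by
  induction k with
  | zero => simp
  | succ k ih =>
    rw [Nat.succ_mul, Finset.sum_range_add, ih, Finset.sum_range_succ]

lemma zag_key (N k : ℕ) (hN : 0 < N) (hk : 0 < k) (P : ℕ → ℝ)
    (hP : ∀ q r : ℕ, P (q * N + r) = P r) :
    (1 / ((k * N : ℕ) : ℝ)) * ∑ j ∈ Finset.range (k * N),
        Real.cot (π * (2 * j + 1) / (2 * ((k * N : ℕ) : ℝ))) * P j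
      = (1 / (N : ℝ)) * ∑ j ∈ Finset.range N,
        Real.cot (π * (2 * j + 1) / (2 * N)) * P j := by
  have hNR : (N : ℝ) ≠ 0 := Nat.cast_ne_zero.mpr hN.ne'
  have hkR : (k : ℝ) ≠ 0 := Nat.cast_ne_zero.mpr hk.ne'
  rw [zag_sum_range_mul, Finset.sum_comm]
  have inner : ∀ r ∈ Finset.range N,
      (∑ q ∈ Finset.range k,
        Real.cot (π * (2 * (q * N + r : ℕ) + 1) / (2 * ((k * N : ℕ) : ℝ))) * P (q * N + r))
      = (k : ℝ) * Real.cot (π * (2 * r + 1) / (2 * N)) * P r := by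
    intro r _
    have harg : ∀ q : ℕ,
        π * (2 * (q * N + r : ℕ) + 1) / (2 * ((k * N : ℕ) : ℝ))
          = π * (2 * r + 1) / (2 * (k * N : ℝ)) + q * π / k := by
      intro q; push_cast; field_simp; ring
    have hkx : (k : ℝ) * (π * (2 * r + 1) / (2 * (k * N : ℝ)))
        = π * (2 * r + 1) / (2 * N) := by field_simp
    have hcond : Complex.exp (2 * Complex.I *
        ((k : ℝ) * (π * (2 * (r:ℝ) + 1) / (2 * (k * N : ℝ))) : ℝ)) ≠ 1 := by
      rw [hkx]
      intro hc
      rw [Complex.exp_eq_one_iff] at hc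
      obtain ⟨m, hm⟩ := hc
      have hπ : (π : ℝ) ≠ 0 := Real.pi_ne_zero
      have hreal : (π * (2 * (r:ℝ) + 1) / (2 * N) : ℝ) = m * π := by
        apply Complex.ofReal_injective
        push_cast
        push_cast at hm
        linear_combination (-Complex.I/2) * hm
          + ((π:ℂ) * (2*(r:ℂ)+1)/(2*(N:ℂ)) - (m:ℂ) * π) * Complex.I_sq
      rw [div_eq_iff (by positivity : (2 * (N:ℝ)) ≠ 0)] at hreal
      have h2 : (2 * (r : ℝ) + 1) = 2 * m * N :=
        mul_left_cancel₀ hπ (by linear_combination hreal)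
      have hint : (2 * (r : ℤ) + 1) = 2 * m * N := by exact_mod_cast h2
      have heven : Even (2 * m * (N:ℤ)) := ⟨m * N, by ring⟩
      have hodd : ¬ Even (2 * (r:ℤ) + 1) := by simp [parity_simps]
      exact hodd (by rw [hint]; exact heven)
    calc ∑ q ∈ Finset.range k,
        Real.cot (π * (2 * (q * N + r : ℕ) + 1) / (2 * ((k * N : ℕ) : ℝ))) * P (q * N + r)
        = ∑ q ∈ Finset.range k,
            Real.cot (π * (2 * r + 1) / (2 * (k * N : ℝ)) + q * π / k) * P r := by
          refine Finset.sum_congr rfl fun q _ => ?_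
          rw [harg q, hP q r]
      _ = (∑ q ∈ Finset.range k,
            Real.cot (π * (2 * r + 1) / (2 * (k * N : ℝ)) + q * π / k)) * P r := by
          rw [Finset.sum_mul]
      _ = (k : ℝ) * Real.cot (π * (2 * r + 1) / (2 * N)) * P r := by
          rw [zag_cot_multiple k hk _ hcond, hkx]
  rw [Finset.sum_congr rfl inner]
  push_cast
  rw [Finset.mul_sum, Finset.mul_sum]
  refine Finset.sum_congr rfl fun r _ => ?_
  field_simp

/-- Zagier's cotangent formula for the signature `t(a)` is independent of the
choice of common multiple `N` of the exponents `a_i`. -/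
theorem stmt_7 (n : ℕ) (hn : Even n) (a : Fin (n + 1) → ℕ) (ha : ∀ i, 0 < a i)
    (N N' : ℕ) (hN : 0 < N) (hN' : 0 < N')
    (hdvd : ∀ i, a i ∣ N) (hdvd' : ∀ i, a i ∣ N') :
    ((-1 : ℝ) ^ (n / 2) / N) * ∑ j ∈ Finset.range N,
        (Real.cot (π * (2 * j + 1) / (2 * N)) *
          ∏ i, Real.cot (π * (2 * j + 1) / (2 * a i))) =
    ((-1 : ℝ) ^ (n / 2) / N') * ∑ j ∈ Finset.range N',
        (Real.cot (π * (2 * j + 1) / (2 * N')) *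
          ∏ i, Real.cot (π * (2 * j + 1) / (2 * a i))) := by
  set P : ℕ → ℝ := fun j => ∏ i, Real.cot (π * (2 * j + 1) / (2 * a i)) with hPdef
  have hper : ∀ (M : ℕ), (∀ i, a i ∣ M) → ∀ q r : ℕ, P (q * M + r) = P r := by
    intro M hM q r
    simp only [hPdef]
    refine Finset.prod_congr rfl fun i _ => ?_
    obtain ⟨c, hc⟩ := hM i
    have hai : ((a i : ℝ)) ≠ 0 := Nat.cast_ne_zero.mpr (ha i).ne'
    have hcR : (M : ℝ) = a i * c := by exact_mod_cast congrArg (Nat.cast : ℕ → ℝ) hc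
    have harg : π * (2 * ((q * M + r : ℕ) : ℝ) + 1) / (2 * a i)
        = π * (2 * r + 1) / (2 * a i) + ((q * c : ℤ) : ℝ) * π := by
      push_cast
      rw [hcR]
      field_simp
      ring
    rw [harg, zag_cot_add_int]
  have key1 := zag_key N N' hN hN' P (hper N hdvd)
  have key2 := zag_key N' N hN' hN P (hper N' hdvd')
  rw [Nat.mul_comm N' N] at key1
  have hmain : (1 / (N : ℝ)) * ∑ j ∈ Finset.range N,
        Real.cot (π * (2 * j + 1) / (2 * N)) * P j
      = (1 / (N' : ℝ)) * ∑ j ∈ Finset.range N',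
        Real.cot (π * (2 * j + 1) / (2 * N')) * P j := key1.symm.trans key2
  simp only [hPdef] at hmain
  linear_combination ((-1 : ℝ) ^ (n / 2)) * hmain
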